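/- For all distinct x, y > 0: (y/(x − y))·( (b(x) − b(0))/x − (b(y) − b(0))/y ) ≤ B₁' + L_G − L_G·min(β − 1, 1)·y·max(x, y)^{β−2}. -/

import Mathlib

open Real

/-- Slope lower bound for rpow: for `0 < γ`, `0 < y < x`,
`min γ 1 * x^(γ-1) * (x - y) ≤ x^γ - y^γ`. -/
lemma slope_rpow_lower_aux {γ : ℝ} (hγ : 0 < γ) {x y : ℝ} (hy : 0 < y) (hxy : y < x) :
    min γ 1 * x ^ (γ - 1) * (x - y) ≤ x ^ γ - y ^ γ := by
  have hx : 0 < x := hy.trans hxy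
  have hxg : x ^ γ = x ^ (γ - 1) * x := by
    have := Real.rpow_add_one hx.ne' (γ - 1)
    rwa [sub_add_cancel] at this
  have hyg : y ^ γ = y ^ (γ - 1) * y := by
    have := Real.rpow_add_one hy.ne' (γ - 1)
    rwa [sub_add_cancel] at this
  rcases le_or_gt 1 γ with h1 | h1
  · rw [min_eq_right h1]
    have hmono : y ^ (γ - 1) ≤ x ^ (γ - 1) :=
      Real.rpow_le_rpow hy.le hxy.le (by linarith)
    nlinarith [Real.rpow_pos_of_pos hy (γ - 1), Real.rpow_pos_of_pos hx (γ - 1),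
      mul_le_mul_of_nonneg_right hmono hy.le]
  · rw [min_eq_left h1.le]
    have hs : -1 ≤ y / x - 1 := by
      have : 0 < y / x := div_pos hy hx
      linarith
    have hs' : y / x - 1 ≠ 0 := by
      have : y / x < 1 := (div_lt_one hx).2 hxy
      intro h; rw [sub_eq_zero] at h; rw [h] at this; exact lt_irrefl _ this
    have hb := rpow_one_add_lt_one_add_mul_self hs hs' hγ h1
    rw [add_sub_cancel] at hb
    -- hb : (y / x) ^ γ < 1 + γ * (y / x - 1)
    have hdiv : (y / x) ^ γ = y ^ γ / x ^ γ := Real.div_rpow hy.le hx.le γ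
    rw [hdiv] at hb
    have hxγ : (0:ℝ) < x ^ γ := Real.rpow_pos_of_pos hx γ
    have hb2 : y ^ γ < (1 + γ * (y / x - 1)) * x ^ γ := by
      rw [div_lt_iff₀ hxγ] at hb; exact hb
    have hexp : (1 + γ * (y / x - 1)) * x ^ γ
        = x ^ γ + γ * (x ^ (γ - 1) * y - x ^ γ) := by
      rw [hxg]
      field_simp
    rw [hexp] at hb2
    nlinarith [hb2, hxg]

theorem drift_quotient_estimate_global
    (β L_G B₁' : ℝ) (hβ : 1 < β) (hLG : 0 ≤ L_G) (hB₁' : 0 ≤ B₁')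
    (b : ℝ → ℝ)
    (hgrowth : ∀ x : ℝ, 0 ≤ x → |b x - b 0| ≤ L_G * max (x ^ β) x)
    (hderiv : ∀ x : ℝ, 0 < x →
      DifferentiableAt ℝ b x ∧ deriv b x ≤ B₁' - β * L_G * x ^ (β - 1)) :
    ∀ x y : ℝ, 0 < x → 0 < y → x ≠ y →
      y / (x - y) * ((b x - b 0) / x - (b y - b 0) / y)
        ≤ B₁' + L_G - L_G * min (β - 1) 1 * y * (max x y) ^ (β - 2) := by
  -- the auxiliary function h(t) = b t - B₁' t + L_G t^β is antitone on (0,∞)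
  have hmono : ∀ s t : ℝ, 0 < s → s < t →
      b t - B₁' * t + L_G * t ^ β ≤ b s - B₁' * s + L_G * s ^ β := by
    intro s t hs hst
    set h : ℝ → ℝ := fun u => b u - B₁' * u + L_G * u ^ β with hh
    have hderivh : ∀ u : ℝ, 0 < u →
        HasDerivAt h (deriv b u - B₁' + L_G * (β * u ^ (β - 1))) u := by
      intro u hu
      have hb : HasDerivAt b (deriv b u) u := (hderiv u hu).1.hasDerivAt
      have hrp : HasDerivAt (fun v : ℝ => v ^ β) (β * u ^ (β - 1)) u :=
        Real.hasDerivAt_rpow_const (Or.inl hu.ne')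
      have h1 : HasDerivAt (fun v : ℝ => B₁' * v) (B₁' * 1) u :=
        (hasDerivAt_id u).const_mul B₁'
      have := (hb.sub h1).add (hrp.const_mul L_G)
      rw [mul_one] at this
      exact this
    have hanti : AntitoneOn h (Set.Ioi (0:ℝ)) := by
      apply antitoneOn_of_deriv_nonpos (convex_Ioi 0)
      · intro u hu
        exact ((hderivh u hu).differentiableAt).continuousAt.continuousWithinAt
      · intro u hu
        rw [interior_Ioi] at hu
        exact ((hderivh u hu).differentiableAt).differentiableWithinAt
      · intro u hu
        rw [interior_Ioi] at hu
        rw [(hderivh u hu).deriv]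
        have := (hderiv u hu).2
        nlinarith [this]
    have := hanti (Set.mem_Ioi.2 hs) (Set.mem_Ioi.2 (hs.trans hst)) hst.le
    simpa [hh] using this
  intro x y hx hy hxy
  have hxne : x ≠ 0 := hx.ne'
  have hyne : y ≠ 0 := hy.ne'
  have hxyne : x - y ≠ 0 := sub_ne_zero.2 hxy
  have hβ1 : (0:ℝ) < β - 1 := by linarith
  set c : ℝ := min (β - 1) 1 with hc
  have hc0 : 0 ≤ c := le_min hβ1.le zero_le_one
  set m : ℝ := (max x y) ^ (β - 2) with hm
  -- rpow decompositions
  have hxg : x ^ β = x ^ (β - 1) * x := by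
    have := Real.rpow_add_one hxne (β - 1)
    rwa [sub_add_cancel] at this
  have hyg : y ^ β = y ^ (β - 1) * y := by
    have := Real.rpow_add_one hyne (β - 1)
    rwa [sub_add_cancel] at this
  -- bound on -(b x - b 0)/x
  have hfx : -(b x - b 0) / x ≤ L_G * (x ^ (β - 1) + 1) := by
    rw [div_le_iff₀ hx]
    have hg := hgrowth x hx.le
    have hmax : max (x ^ β) x ≤ x ^ β + x := by
      apply max_le
      · linarith
      · have : (0:ℝ) ≤ x ^ β := (Real.rpow_pos_of_pos hx β).le
        linarith
    have h2 : L_G * max (x ^ β) x ≤ L_G * (x ^ β + x) :=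
      mul_le_mul_of_nonneg_left hmax hLG
    have h3 : -(b x - b 0) ≤ L_G * (x ^ β + x) :=
      le_trans (le_trans (neg_le_abs _) hg) h2
    nlinarith [h3, hxg]
  -- key slope bound
  have key : (b x - b 0 - (b y - b 0)) / (x - y)
      ≤ B₁' - L_G * (x ^ (β - 1) + y * (c * m)) := by
    rcases hxy.lt_or_gt with hlt | hlt
    · -- x < y, max = y
      have hmax : max x y = y := max_eq_right hlt.le
      have hsl : c * y ^ (β - 1 - 1) * (y - x) ≤ y ^ (β - 1) - x ^ (β - 1) :=
        slope_rpow_lower_aux hβ1 hx hlt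
      have hexp : β - 1 - 1 = β - 2 := by ring
      rw [hexp] at hsl
      have hm' : m = y ^ (β - 2) := by rw [hm, hmax]
      have hA : (x ^ (β - 1) + y * (c * m)) * (y - x) ≤ y ^ β - x ^ β := by
        rw [hm']
        nlinarith [mul_le_mul_of_nonneg_left hsl hy.le]
      have hA2 : L_G * ((x ^ (β - 1) + y * (c * m)) * (y - x)) ≤ L_G * (y ^ β - x ^ β) :=
        mul_le_mul_of_nonneg_left hA hLG
      have hmn := hmono x y hx hlt
      rw [div_le_iff_of_neg (by linarith : x - y < 0)]
      nlinarith [hA2, hmn]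
    · -- y < x, max = x
      have hmax : max x y = x := max_eq_left hlt.le
      have hsl : c * x ^ (β - 1 - 1) * (x - y) ≤ x ^ (β - 1) - y ^ (β - 1) :=
        slope_rpow_lower_aux hβ1 hy hlt
      have hexp : β - 1 - 1 = β - 2 := by ring
      rw [hexp] at hsl
      have hm' : m = x ^ (β - 2) := by rw [hm, hmax]
      have hA : (x ^ (β - 1) + y * (c * m)) * (x - y) ≤ x ^ β - y ^ β := by
        rw [hm']
        nlinarith [mul_le_mul_of_nonneg_left hsl hy.le]
      have hA2 : L_G * ((x ^ (β - 1) + y * (c * m)) * (x - y)) ≤ L_G * (x ^ β - y ^ β) :=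
        mul_le_mul_of_nonneg_left hA hLG
      have hmn := hmono y x hy hlt
      rw [div_le_iff₀ (by linarith : 0 < x - y)]
      nlinarith [hA2, hmn]
  calc y / (x - y) * ((b x - b 0) / x - (b y - b 0) / y)
      = (b x - b 0 - (b y - b 0)) / (x - y) + -(b x - b 0) / x := by
        field_simp
        ring
    _ ≤ (B₁' - L_G * (x ^ (β - 1) + y * (c * m))) + L_G * (x ^ (β - 1) + 1) :=
        add_le_add key hfx
    _ = B₁' + L_G - L_G * c * y * m := by ring
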